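/- Let X be a real normed space and let x₀ ∈ X be a nonzero vector. Then x₀ has exactly one norming functional if and only if the norm is Gâteaux-differentiable at x₀, i.e. there exists a continuous linear functional f : X → ℝ such that for every v ∈ X, (‖x₀ + t·v‖ − ‖x₀‖)/t tends to f(v) as t tends to 0 (through nonzero real t). -/

import Mathlib

open Filter Set Topology

namespace UNFaux

variable {X : Type*} [NormedAddCommGroup X] [NormedSpace ℝ X]

/-- The difference quotient of the norm at `x₀` in direction `v`. -/
noncomputable def Q (x₀ v : X) (t : ℝ) : ℝ := (‖x₀ + t • v‖ - ‖x₀‖) / t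

lemma abs_Q_le (x₀ v : X) {t : ℝ} (ht : t ≠ 0) : |Q x₀ v t| ≤ ‖v‖ := by
  rw [Q, abs_div, div_le_iff₀ (abs_pos.mpr ht)]
  calc |‖x₀ + t • v‖ - ‖x₀‖| ≤ ‖t • v‖ := by
        simpa using abs_norm_sub_norm_le (x₀ + t • v) x₀
    _ = ‖v‖ * |t| := by rw [norm_smul, Real.norm_eq_abs, mul_comm]

lemma convexOn_phi (x₀ v : X) : ConvexOn ℝ univ (fun t : ℝ => ‖x₀ + t • v‖) := by
  refine ⟨convex_univ, fun a _ b _ μ ν hμ hν hμν => ?_⟩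
  simp only [smul_eq_mul]
  have h : x₀ + (μ * a + ν * b) • v = μ • (x₀ + a • v) + ν • (x₀ + b • v) := by
    have h1 : μ • x₀ + ν • x₀ = x₀ := by rw [← add_smul, hμν, one_smul]
    rw [smul_add, smul_add, add_smul, mul_smul, mul_smul, add_add_add_comm, h1]
  rw [h]
  calc ‖μ • (x₀ + a • v) + ν • (x₀ + b • v)‖
      ≤ ‖μ • (x₀ + a • v)‖ + ‖ν • (x₀ + b • v)‖ := norm_add_le _ _
    _ = μ * ‖x₀ + a • v‖ + ν * ‖x₀ + b • v‖ := by
        rw [norm_smul, norm_smul, Real.norm_eq_abs, Real.norm_eq_abs, abs_of_nonneg hμ,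
          abs_of_nonneg hν]

lemma Q_mono (x₀ v : X) : MonotoneOn (Q x₀ v) {(0 : ℝ)}ᶜ := by
  intro a ha b hb hab
  have h := (convexOn_phi x₀ v).secant_mono (a := 0) (mem_univ _) (mem_univ _)
    (mem_univ _) (by simpa using ha) (by simpa using hb) hab
  simpa [Q, zero_smul] using h

lemma bddBelow_Q (x₀ v : X) : BddBelow (Q x₀ v '' Ioi 0) := by
  refine ⟨-‖v‖, ?_⟩
  rintro _ ⟨t, ht, rfl⟩
  exact neg_le_of_abs_le (abs_Q_le x₀ v (ne_of_gt ht))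

/-- The right derivative of the norm at `x₀` in direction `v`. -/
noncomputable def p (x₀ v : X) : ℝ := sInf (Q x₀ v '' Ioi 0)

lemma tendsto_Q_right (x₀ v : X) : Tendsto (Q x₀ v) (𝓝[>] 0) (𝓝 (p x₀ v)) :=
  MonotoneOn.tendsto_nhdsGT ((Q_mono x₀ v).mono fun t (ht : (0:ℝ) < t) => ne_of_gt ht)
    (bddBelow_Q x₀ v)

lemma Q_neg (x₀ v : X) (t : ℝ) : Q x₀ v t = -Q x₀ (-v) (-t) := by
  simp only [Q, neg_smul, smul_neg, neg_neg, div_neg, neg_neg]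

lemma tendsto_Q_left (x₀ v : X) : Tendsto (Q x₀ v) (𝓝[<] 0) (𝓝 (-p x₀ (-v))) := by
  have hneg : Tendsto (fun t : ℝ => -t) (𝓝[<] (0 : ℝ)) (𝓝[>] (0 : ℝ)) := by
    apply tendsto_nhdsWithin_of_tendsto_nhds_of_eventually_within
    · simpa using (continuous_neg.tendsto (0:ℝ)).mono_left nhdsWithin_le_nhds
    · filter_upwards [self_mem_nhdsWithin] with t ht
      exact mem_Ioi.mpr (neg_pos.mpr (mem_Iio.mp ht))
  have h := ((tendsto_Q_right x₀ (-v)).comp hneg).neg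
  refine h.congr fun t => ?_
  rw [Q_neg x₀ v t]
  rfl

lemma Q_smul (x₀ v : X) {c : ℝ} (hc : 0 < c) (t : ℝ) (ht : t ≠ 0) :
    Q x₀ (c • v) t = c * Q x₀ v (c * t) := by
  rw [Q, Q, smul_smul, mul_comm t c]
  field_simp

lemma p_smul (x₀ v : X) {c : ℝ} (hc : 0 < c) : p x₀ (c • v) = c * p x₀ v := by
  have hmul : Tendsto (fun t : ℝ => c * t) (𝓝[>] (0 : ℝ)) (𝓝[>] (0 : ℝ)) := by
    apply tendsto_nhdsWithin_of_tendsto_nhds_of_eventually_within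
    · simpa using ((continuous_mul_left c).tendsto (0:ℝ)).mono_left
        nhdsWithin_le_nhds
    · filter_upwards [self_mem_nhdsWithin] with t ht
      exact mem_Ioi.mpr (mul_pos hc (mem_Ioi.mp ht))
  have h1 : Tendsto (Q x₀ (c • v)) (𝓝[>] (0:ℝ)) (𝓝 (c * p x₀ v)) := by
    have h := ((tendsto_Q_right x₀ v).comp hmul).const_mul c
    refine h.congr' ?_
    filter_upwards [self_mem_nhdsWithin] with t ht
    exact (Q_smul x₀ v hc t (ne_of_gt ht)).symm
  exact tendsto_nhds_unique (tendsto_Q_right x₀ (c • v)) h1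

lemma p_zero (x₀ : X) : p x₀ (0 : X) = 0 := by
  have h1 : Tendsto (Q x₀ (0 : X)) (𝓝[>] (0:ℝ)) (𝓝 0) := by
    refine tendsto_const_nhds.congr' ?_
    filter_upwards [self_mem_nhdsWithin] with t ht
    simp [Q]
  exact tendsto_nhds_unique (tendsto_Q_right x₀ 0) h1

lemma p_add_le (x₀ u v : X) : p x₀ (u + v) ≤ p x₀ u + p x₀ v := by
  have hmul : Tendsto (fun t : ℝ => 2 * t) (𝓝[>] (0 : ℝ)) (𝓝[>] (0 : ℝ)) := by
    apply tendsto_nhdsWithin_of_tendsto_nhds_of_eventually_within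
    · simpa using ((continuous_mul_left (2:ℝ)).tendsto (0:ℝ)).mono_left
        nhdsWithin_le_nhds
    · filter_upwards [self_mem_nhdsWithin] with t ht
      exact mem_Ioi.mpr (mul_pos two_pos (mem_Ioi.mp ht))
  have h2 : Tendsto (fun t => Q x₀ u (2 * t) + Q x₀ v (2 * t)) (𝓝[>] (0:ℝ))
      (𝓝 (p x₀ u + p x₀ v)) :=
    (((tendsto_Q_right x₀ u).comp hmul).add ((tendsto_Q_right x₀ v).comp hmul))
  refine le_of_tendsto_of_tendsto (tendsto_Q_right x₀ (u + v)) h2 ?_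
  filter_upwards [self_mem_nhdsWithin] with t ht
  have ht0 : (0:ℝ) < t := mem_Ioi.mp ht
  have key : x₀ + t • (u + v)
      = (1/2 : ℝ) • (x₀ + (2*t) • u) + (1/2 : ℝ) • (x₀ + (2*t) • v) := by
    have h1 : (1/2 : ℝ) • x₀ + (1/2 : ℝ) • x₀ = x₀ := by
      rw [← add_smul]; norm_num
    rw [smul_add, smul_add, smul_add, smul_smul, smul_smul, add_add_add_comm, h1,
      show (1/2 : ℝ) * (2*t) = t by ring]
  have hnorm : ‖x₀ + t • (u + v)‖
      ≤ (1/2) * ‖x₀ + (2*t) • u‖ + (1/2) * ‖x₀ + (2*t) • v‖ := by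
    rw [key]
    refine (norm_add_le _ _).trans ?_
    rw [norm_smul, norm_smul, Real.norm_eq_abs, abs_of_pos one_half_pos]
  have heq : Q x₀ u (2*t) + Q x₀ v (2*t)
      = ((1/2) * ‖x₀ + (2*t) • u‖ + (1/2) * ‖x₀ + (2*t) • v‖ - ‖x₀‖) / t := by
    rw [Q, Q]
    field_simp
    ring
  show Q x₀ (u + v) t ≤ Q x₀ u (2*t) + Q x₀ v (2*t)
  rw [heq, Q]
  gcongr

lemma norming_le_Q {x₀ v : X} (g : X →L[ℝ] ℝ) (hg1 : ‖g‖ = 1) (hg2 : g x₀ = ‖x₀‖)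
    {t : ℝ} (ht : 0 < t) : g v ≤ Q x₀ v t := by
  have h := g.le_opNorm (x₀ + t • v)
  rw [hg1, one_mul, map_add, hg2, map_smul, smul_eq_mul, Real.norm_eq_abs] at h
  have h2 := (le_abs_self (‖x₀‖ + t * g v)).trans h
  rw [Q, le_div_iff₀ ht]
  linarith

lemma Q_le_norming {x₀ v : X} (g : X →L[ℝ] ℝ) (hg1 : ‖g‖ = 1) (hg2 : g x₀ = ‖x₀‖)
    {t : ℝ} (ht : t < 0) : Q x₀ v t ≤ g v := by
  have h := g.le_opNorm (x₀ + t • v)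
  rw [hg1, one_mul, map_add, hg2, map_smul, smul_eq_mul, Real.norm_eq_abs] at h
  have h2 := (le_abs_self (‖x₀‖ + t * g v)).trans h
  rw [Q, div_le_iff_of_neg ht]
  linarith

lemma p_le_norm (x₀ v : X) : p x₀ v ≤ ‖v‖ := by
  refine csInf_le_of_le (bddBelow_Q x₀ v) ⟨1, mem_Ioi.mpr one_pos, rfl⟩ ?_
  exact le_of_abs_le (abs_Q_le x₀ v one_ne_zero)

lemma neg_p_neg_le (x₀ v : X) : -p x₀ (-v) ≤ p x₀ v := by
  have h := p_add_le x₀ v (-v)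
  rw [add_neg_cancel, p_zero] at h
  linarith

lemma p_x₀ (x₀ : X) (hx₀ : x₀ ≠ 0) : p x₀ x₀ = ‖x₀‖ := by
  have h1 : Tendsto (Q x₀ x₀) (𝓝[>] (0:ℝ)) (𝓝 ‖x₀‖) := by
    refine tendsto_const_nhds.congr' ?_
    filter_upwards [self_mem_nhdsWithin] with t (ht : (0:ℝ) < t)
    have : x₀ + t • x₀ = (1 + t) • x₀ := by rw [add_smul, one_smul]
    rw [Q, this, norm_smul, Real.norm_eq_abs, abs_of_pos (by linarith)]
    field_simp
    ring
  exact tendsto_nhds_unique (tendsto_Q_right x₀ x₀) h1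

lemma p_neg_x₀ (x₀ : X) (hx₀ : x₀ ≠ 0) : p x₀ (-x₀) = -‖x₀‖ := by
  have h1 : Tendsto (Q x₀ (-x₀)) (𝓝[>] (0:ℝ)) (𝓝 (-‖x₀‖)) := by
    refine tendsto_const_nhds.congr' ?_
    filter_upwards [Ioo_mem_nhdsGT_of_mem (Set.mem_Ico.mpr ⟨le_refl 0, one_pos⟩)]
      with t ht
    obtain ⟨ht0, ht1⟩ := ht
    have : x₀ + t • (-x₀) = (1 - t) • x₀ := by
      rw [sub_smul, one_smul, smul_neg]; abel
    rw [Q, this, norm_smul, Real.norm_eq_abs, abs_of_pos (by linarith)]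
    field_simp
    ring
  exact tendsto_nhds_unique (tendsto_Q_right x₀ (-x₀)) h1

/-- Hahn–Banach: there is a norming functional attaining `p x₀ v` at `v`. -/
lemma exists_norming_eq_p (x₀ : X) (hx₀ : x₀ ≠ 0) (v : X) (hv : v ≠ 0) :
    ∃ g : X →L[ℝ] ℝ, ‖g‖ = 1 ∧ g x₀ = ‖x₀‖ ∧ g v = p x₀ v := by
  set f : X →ₗ.[ℝ] ℝ := LinearPMap.mkSpanSingleton' v (p x₀ v)
    (fun c hc => by rw [smul_eq_zero] at hc; rcases hc with hc | hc
                    · simp [hc]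
                    · exact absurd hc hv) with hf
  have hle : ∀ x : f.domain, f x ≤ p x₀ (x : X) := by
    rintro ⟨x, hx⟩
    rw [hf, LinearPMap.domain_mkSpanSingleton] at hx
    obtain ⟨c, rfl⟩ := Submodule.mem_span_singleton.mp hx
    have happ : f ⟨c • v, hx⟩ = c • p x₀ v := LinearPMap.mkSpanSingleton'_apply v _ _ c _
    rw [happ, smul_eq_mul]
    rcases lt_trichotomy c 0 with hc | hc | hc
    · have h1 : p x₀ (c • v) = -c * p x₀ (-v) := by
        have : c • v = (-c) • (-v) := by rw [neg_smul, smul_neg, neg_neg]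
        rw [this, p_smul x₀ (-v) (neg_pos.mpr hc)]
      rw [h1]
      have h2 := neg_p_neg_le x₀ v
      nlinarith
    · simp [hc, p_zero]
    · rw [p_smul x₀ v hc]
  obtain ⟨g, hg_eq, hg_le⟩ := exists_extension_of_le_sublinear f (p x₀)
    (fun c hc x => p_smul x₀ x hc) (p_add_le x₀) hle
  have habs : ∀ x : X, |g x| ≤ ‖x‖ := by
    intro x
    rw [abs_le]
    constructor
    · have := (hg_le (-x)).trans (p_le_norm x₀ (-x))
      rw [map_neg, norm_neg] at this
      linarith
    · exact (hg_le x).trans (p_le_norm x₀ x)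
  set G : X →L[ℝ] ℝ := g.mkContinuous 1 (fun x => by simpa using habs x) with hG
  have hGapp : ∀ x, G x = g x := fun x => rfl
  have hGx₀ : G x₀ = ‖x₀‖ := by
    have h1 : g x₀ ≤ ‖x₀‖ := (hg_le x₀).trans_eq (p_x₀ x₀ hx₀)
    have h2 : g (-x₀) ≤ -‖x₀‖ := (hg_le (-x₀)).trans_eq (p_neg_x₀ x₀ hx₀)
    rw [map_neg] at h2
    rw [hGapp]
    linarith
  have hGnorm : ‖G‖ = 1 := by
    refine le_antisymm (G.opNorm_le_bound zero_le_one fun x => by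
      rw [hGapp]; simpa using habs x) ?_
    have h := G.le_opNorm x₀
    rw [hGx₀, Real.norm_eq_abs, abs_of_nonneg (norm_nonneg x₀)] at h
    have hx₀' : 0 < ‖x₀‖ := norm_pos_iff.mpr hx₀
    nlinarith
  refine ⟨G, hGnorm, hGx₀, ?_⟩
  have hvmem : v ∈ f.domain := by
    rw [hf, LinearPMap.domain_mkSpanSingleton]
    exact Submodule.mem_span_singleton_self v
  calc G v = g v := hGapp v
    _ = f ⟨v, hvmem⟩ := by rw [hg_eq ⟨v, hvmem⟩]
    _ = p x₀ v := LinearPMap.mkSpanSingleton'_apply_self v _ _ _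

end UNFaux

open UNFaux

theorem unique_norming_functional_iff_gateaux {X : Type*} [NormedAddCommGroup X]
    [NormedSpace ℝ X] (x₀ : X) (hx₀ : x₀ ≠ 0) :
    (∃! f : X →L[ℝ] ℝ, ‖f‖ = 1 ∧ f x₀ = ‖x₀‖) ↔
      ∃ f : X →L[ℝ] ℝ, ∀ v : X,
        Tendsto (fun t : ℝ => (‖x₀ + t • v‖ - ‖x₀‖) / t) (nhdsWithin 0 {0}ᶜ)
          (nhds (f v)) := by
  constructor
  · rintro ⟨f, ⟨hf1, hf2⟩, huniq⟩
    refine ⟨f, fun v => ?_⟩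
    -- `f v = p x₀ v` and `f (-v) = p x₀ (-v)` by uniqueness of norming functionals
    have key : ∀ w : X, f w = p x₀ w := by
      intro w
      rcases eq_or_ne w 0 with rfl | hw
      · rw [map_zero, p_zero]
      · obtain ⟨g, hg1, hg2, hg3⟩ := exists_norming_eq_p x₀ hx₀ w hw
        rw [← huniq g ⟨hg1, hg2⟩, hg3]
    have hQ : (fun t : ℝ => (‖x₀ + t • v‖ - ‖x₀‖) / t) = Q x₀ v := rfl
    rw [hQ, ← nhdsLT_sup_nhdsGT (0:ℝ), tendsto_sup]
    constructor
    · have h := tendsto_Q_left x₀ v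
      rw [← key, map_neg, neg_neg] at h
      exact h
    · have h := tendsto_Q_right x₀ v
      rw [← key] at h
      exact h
  · rintro ⟨f, hf⟩
    have hlR : 𝓝[>] (0:ℝ) ≤ 𝓝[≠] (0:ℝ) :=
      nhdsWithin_mono 0 fun t (ht : (0:ℝ) < t) => ne_of_gt ht
    have hfR : ∀ v : X, Tendsto (Q x₀ v) (𝓝[>] (0:ℝ)) (𝓝 (f v)) :=
      fun v => (hf v).mono_left hlR
    -- `f` is a norming functional
    have hfx₀ : f x₀ = ‖x₀‖ := by
      have h1 : Tendsto (Q x₀ x₀) (𝓝[>] (0:ℝ)) (𝓝 ‖x₀‖) := by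
        refine tendsto_const_nhds.congr' ?_
        filter_upwards [self_mem_nhdsWithin] with t ht
        have ht0 : (0:ℝ) < t := mem_Ioi.mp ht
        have : x₀ + t • x₀ = (1 + t) • x₀ := by rw [add_smul, one_smul]
        rw [Q, this, norm_smul, Real.norm_eq_abs, abs_of_pos (by linarith)]
        field_simp
        ring
      exact tendsto_nhds_unique (hfR x₀) h1
    have hfle : ∀ v : X, f v ≤ ‖v‖ := by
      intro v
      refine le_of_tendsto (hfR v) ?_
      filter_upwards [self_mem_nhdsWithin] with t ht
      exact le_of_abs_le (abs_Q_le x₀ v (ne_of_gt (mem_Ioi.mp ht)))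
    have hfnorm : ‖f‖ = 1 := by
      refine le_antisymm (f.opNorm_le_bound zero_le_one fun x => ?_) ?_
      · rw [one_mul, Real.norm_eq_abs, abs_le]
        refine ⟨?_, hfle x⟩
        have := hfle (-x)
        rw [map_neg, norm_neg] at this
        linarith
      · have h := f.le_opNorm x₀
        rw [hfx₀, Real.norm_eq_abs, abs_of_nonneg (norm_nonneg x₀)] at h
        have hx₀' : 0 < ‖x₀‖ := norm_pos_iff.mpr hx₀
        nlinarith
    refine ⟨f, ⟨hfnorm, hfx₀⟩, ?_⟩
    rintro g ⟨hg1, hg2⟩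
    ext v
    have h1 : g v ≤ f v := by
      refine ge_of_tendsto (hfR v) ?_
      filter_upwards [self_mem_nhdsWithin] with t ht
      exact norming_le_Q g hg1 hg2 (mem_Ioi.mp ht)
    have h2 : g (-v) ≤ f (-v) := by
      refine ge_of_tendsto (hfR (-v)) ?_
      filter_upwards [self_mem_nhdsWithin] with t ht
      exact norming_le_Q g hg1 hg2 (mem_Ioi.mp ht)
    rw [map_neg, map_neg] at h2
    exact le_antisymm h1 (by linarith)
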